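/- Main monotonic improvement bound, KL-budget form (Theorem 4, 1/(4C_K) branch): Let π_K and π_{K+1} be policies of a finite MDP with π_K(s,a) > 0 for all s, a, and suppose there is C > 0 with max_{s∈S} D_KL(π_{K+1}(s,·) ‖ π_K(s,·)) ≤ 2C. Let A = A^{π_{K+1}}_{π_K, d^{π_K}}, assume A ≥ 0, set ζ = (1−γ)³·A / (8γC), assume ζ ≤ 1, and define π̃(s,a) = ζ·π_{K+1}(s,a) + (1−ζ)·π_K(s,a). Then J^{π̃} − J^{π_K} ≥ ((1−γ)³·A² / (4γ)) · (1/(4C)). -/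

import Mathlib

open Finset

/-- A finite Markov decision process with bounded rewards and discount `γ ∈ (0,1)`. -/
structure FiniteMDP (S A : Type) [Fintype S] [Fintype A] : Type where
  P : S → A → S → ℝ
  r : S → A → ℝ
  γ : ℝ
  s0 : S
  P_nonneg : ∀ s a s', 0 ≤ P s a s'
  P_sum_one : ∀ s a, ∑ s', P s a s' = 1
  r_bound : ∀ s a, |r s a| ≤ 1
  γ_pos : 0 < γ
  γ_lt_one : γ < 1

variable {S A : Type} [Fintype S] [Fintype A] [DecidableEq S]

/-- `π` is a (stochastic) policy. -/
def IsPolicy (π : S → A → ℝ) : Prop :=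
  (∀ s a, 0 ≤ π s a) ∧ ∀ s, ∑ a, π s a = 1

/-- `Q` satisfies the Bellman equation of policy `π`. -/
def IsQ (M : FiniteMDP S A) (π Q : S → A → ℝ) : Prop :=
  ∀ s a, Q s a = M.r s a + M.γ * ∑ s', M.P s a s' * ∑ a', π s' a' * Q s' a'

/-- `d` is the discounted state (occupancy) distribution of policy `π`. -/
def IsD (M : FiniteMDP S A) (π : S → A → ℝ) (d : S → ℝ) : Prop :=
  ∀ s', d s' = (1 - M.γ) * (if s' = M.s0 then (1 : ℝ) else 0)
      + M.γ * ∑ s, d s * ∑ a, π s a * M.P s a s'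

/-- The normalized return `J^π = ∑_s d^π(s) ∑_a π(s,a) r(s,a)`. -/
def Jret (M : FiniteMDP S A) (π : S → A → ℝ) (d : S → ℝ) : ℝ :=
  ∑ s, d s * ∑ a, π s a * M.r s a

/-- The policy advantage function `A^{π'}_π(s) = ∑_a (π'(s,a) − π(s,a)) Q_π(s,a)`. -/
def polAdv (π' π Q : S → A → ℝ) (s : S) : ℝ :=
  ∑ a, (π' s a - π s a) * Q s a

/-- The expected policy advantage `A^{π'}_{π,d}`. -/
def expPolAdv (π' π Q : S → A → ℝ) (d : S → ℝ) : ℝ :=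
  ∑ s, d s * polAdv π' π Q s

/-- `δ(π',π) = max_s ∑_a |π'(s,a) − π(s,a)|`. -/
noncomputable def polDist (π' π : S → A → ℝ) : ℝ :=
  ⨆ s : S, ∑ a, |π' s a - π s a|

/-- `ΔA^{π'}_π = max_{s,s'} |A^{π'}_π(s) − A^{π'}_π(s')|`. -/
noncomputable def advRange (π' π Q : S → A → ℝ) : ℝ :=
  ⨆ p : S × S, |polAdv π' π Q p.1 - polAdv π' π Q p.2|

/-- Kullback–Leibler divergence between probability vectors on a finite set. -/
noncomputable def KLdiv {B : Type} [Fintype B] (p q : B → ℝ) : ℝ :=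
  ∑ a ∈ Finset.univ.filter (fun a => 0 < p a), p a * Real.log (p a / q a)


noncomputable def gfun (p : ℝ) : ℝ → ℝ :=
  fun x => p * Real.log p - p * Real.log x +
    ((1 - p) * Real.log (1 - p) - (1 - p) * Real.log (1 - x)) - 2 * (p - x) ^ 2

lemma gfun_hasDeriv (p : ℝ) {x : ℝ} (hx0 : 0 < x) (hx1 : x < 1) :
    HasDerivAt (gfun p) ((x - p) * (1 / (x * (1 - x)) - 4)) x := by
  have h1 : HasDerivAt (fun x : ℝ => p * Real.log x) (p * x⁻¹) x :=
    (Real.hasDerivAt_log hx0.ne').const_mul p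
  have h2 : HasDerivAt (fun x : ℝ => (1 : ℝ) - x) (-1) x := by
    simpa using (hasDerivAt_id x).const_sub 1
  have h3 : HasDerivAt (fun x : ℝ => (1 - p) * Real.log (1 - x))
      ((1 - p) * ((1 - x)⁻¹ * (-1))) x :=
    ((Real.hasDerivAt_log (by linarith : (1:ℝ) - x ≠ 0)).comp x h2).const_mul (1 - p)
  have h5 : HasDerivAt (fun x : ℝ => p - x) (-1) x := by
    simpa using (hasDerivAt_id x).const_sub p
  have h4 : HasDerivAt (fun x : ℝ => 2 * (p - x) ^ 2)
      (2 * ((2 : ℕ) * (p - x) ^ 1 * (-1))) x := (h5.pow 2).const_mul 2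
  have h := (((hasDerivAt_const x (p * Real.log p)).sub h1).add
      ((hasDerivAt_const x ((1 - p) * Real.log (1 - p))).sub h3)).sub h4
  refine HasDerivAt.congr_deriv h ?_
  have hx : x ≠ 0 := hx0.ne'
  have hx' : (1:ℝ) - x ≠ 0 := by linarith
  field_simp
  ring

lemma gfun_cont_mul_log (c l u : ℝ) (h : c ≠ 0 → 0 < l) :
    ContinuousOn (fun x : ℝ => c * Real.log x) (Set.Icc l u) := by
  rcases eq_or_ne c 0 with rfl | hc
  · simpa using continuousOn_const
  · exact continuousOn_const.mul (Real.continuousOn_log.mono (by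
      intro x hx
      have := h hc
      simp only [Set.mem_compl_iff, Set.mem_singleton_iff]
      have : 0 < x := lt_of_lt_of_le (h hc) hx.1
      exact this.ne'))

lemma gfun_cont (p l u : ℝ) (hl : p ≠ 0 → 0 < l) (hu : p ≠ 1 → u < 1) :
    ContinuousOn (gfun p) (Set.Icc l u) := by
  unfold gfun
  have c1 : ContinuousOn (fun x : ℝ => p * Real.log x) (Set.Icc l u) :=
    gfun_cont_mul_log p l u hl
  have c2 : ContinuousOn (fun x : ℝ => (1 - p) * Real.log (1 - x)) (Set.Icc l u) := by
    have := gfun_cont_mul_log (1 - p) (1 - u) (1 - l) (by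
      intro h; have : p ≠ 1 := fun hp => h (by rw [hp]; ring); linarith [hu this])
    have comp : ContinuousOn ((fun y : ℝ => (1 - p) * Real.log y) ∘ (fun x : ℝ => 1 - x))
        (Set.Icc l u) := by
      apply this.comp (continuousOn_const.sub continuousOn_id)
      intro x hx
      exact ⟨by simp only [Pi.sub_apply, id_eq]; linarith [hx.2], by simp only [Pi.sub_apply, id_eq]; linarith [hx.1]⟩
    exact comp
  exact ((continuousOn_const.sub c1).add (continuousOn_const.sub c2)).sub
    (continuousOn_const.mul (((continuousOn_const.sub continuousOn_id)).pow 2))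

lemma gfun_self (p : ℝ) : gfun p p = 0 := by unfold gfun; ring

lemma gfun_nonneg (p q : ℝ) (hp0 : 0 ≤ p) (hp1 : p ≤ 1) (hq0 : 0 < q) (hq1 : q < 1) :
    0 ≤ gfun p q := by
  have hfac : ∀ x : ℝ, 0 < x → x < 1 → 0 ≤ 1 / (x * (1 - x)) - 4 := by
    intro x h0 h1
    rw [sub_nonneg, le_div_iff₀ (by nlinarith)]
    nlinarith [sq_nonneg (x - 1/2)]
  rcases le_total p q with hpq | hpq
  · have mono : MonotoneOn (gfun p) (Set.Icc p q) := by
      apply monotoneOn_of_deriv_nonneg (convex_Icc p q)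
      · exact gfun_cont p p q (fun h => lt_of_le_of_ne hp0 (Ne.symm h)) (fun _ => hq1)
      · rw [interior_Icc]
        intro x hx
        exact ((gfun_hasDeriv p (lt_of_le_of_lt hp0 hx.1)
          (lt_trans hx.2 hq1)).differentiableAt).differentiableWithinAt
      · rw [interior_Icc]
        intro x hx
        have h0 : 0 < x := lt_of_le_of_lt hp0 hx.1
        have h1 : x < 1 := lt_trans hx.2 hq1
        rw [(gfun_hasDeriv p h0 h1).deriv]
        exact mul_nonneg (by linarith [hx.1]) (hfac x h0 h1)
    have := mono (Set.left_mem_Icc.2 hpq) (Set.right_mem_Icc.2 hpq) hpq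
    rwa [gfun_self] at this
  · have anti : AntitoneOn (gfun p) (Set.Icc q p) := by
      apply antitoneOn_of_deriv_nonpos (convex_Icc q p)
      · exact gfun_cont p q p (fun _ => hq0) (fun h => lt_of_le_of_ne hp1 h)
      · rw [interior_Icc]
        intro x hx
        exact ((gfun_hasDeriv p (lt_trans hq0 hx.1)
          (lt_of_lt_of_le hx.2 hp1)).differentiableAt).differentiableWithinAt
      · rw [interior_Icc]
        intro x hx
        have h0 : 0 < x := lt_trans hq0 hx.1
        have h1 : x < 1 := lt_of_lt_of_le hx.2 hp1
        rw [(gfun_hasDeriv p h0 h1).deriv]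
        exact mul_nonpos_of_nonpos_of_nonneg (by linarith [hx.2]) (hfac x h0 h1)
    have := anti (Set.left_mem_Icc.2 hpq) (Set.right_mem_Icc.2 hpq) hpq
    rwa [gfun_self] at this

lemma pinsker_bin (p q : ℝ) (hp0 : 0 ≤ p) (hp1 : p ≤ 1) (hq0 : 0 ≤ q) (hq1 : q ≤ 1)
    (h0 : q = 0 → p = 0) (h1 : q = 1 → p = 1) :
    2 * (p - q) ^ 2 ≤ p * Real.log (p / q) + (1 - p) * Real.log ((1 - p) / (1 - q)) := by
  rcases eq_or_lt_of_le hq0 with h | hq0'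
  · have hp := h0 h.symm
    subst hp
    rw [← h]
    norm_num
  rcases eq_or_lt_of_le hq1 with h | hq1'
  · have hp := h1 h
    subst hp
    rw [h]
    norm_num
  · have key := gfun_nonneg p q hp0 hp1 hq0' hq1'
    have e1 : p * Real.log (p / q) = p * Real.log p - p * Real.log q := by
      rcases eq_or_lt_of_le hp0 with h | h
      · rw [← h]; ring
      · rw [Real.log_div h.ne' hq0'.ne']; ring
    have e2 : (1 - p) * Real.log ((1 - p) / (1 - q)) =
        (1 - p) * Real.log (1 - p) - (1 - p) * Real.log (1 - q) := by
      rcases eq_or_lt_of_le (by linarith : (0:ℝ) ≤ 1 - p) with h | h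
      · rw [← h]; ring
      · rw [Real.log_div h.ne' (by linarith)]; ring
    unfold gfun at key
    linarith

open Finset in
lemma log_sum_ineq {B : Type} [Fintype B] (p q : B → ℝ) (hp : ∀ a, 0 ≤ p a)
    (hq : ∀ a, 0 < q a) (T : Finset B) :
    (∑ a ∈ T, p a) * Real.log ((∑ a ∈ T, p a) / (∑ a ∈ T, q a)) ≤
      ∑ a ∈ T.filter (fun a => 0 < p a), p a * Real.log (p a / q a) := by
  classical
  set T' := T.filter (fun a => 0 < p a) with hT'
  have hPsum : ∑ a ∈ T', p a = ∑ a ∈ T, p a := by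
    apply Finset.sum_filter_of_ne
    intro a _ h
    exact lt_of_le_of_ne (hp a) (Ne.symm h)
  rcases Finset.eq_empty_or_nonempty T' with he | hne
  · have : ∑ a ∈ T, p a = 0 := by rw [← hPsum, he]; simp
    rw [this, he]
    simp
  · set P := ∑ a ∈ T, p a with hP
    set Q' := ∑ a ∈ T', q a with hQ'
    set Q := ∑ a ∈ T, q a with hQ
    have hPpos : 0 < P := by
      rw [← hPsum]
      exact Finset.sum_pos (fun a ha => (Finset.mem_filter.1 ha).2) hne
    have hQ'pos : 0 < Q' := Finset.sum_pos (fun a _ => hq a) hne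
    have hQpos : 0 < Q := Finset.sum_pos (fun a _ => hq a)
      ⟨hne.choose, Finset.mem_of_mem_filter _ hne.choose_spec⟩
    have hQ'Q : Q' ≤ Q := Finset.sum_le_sum_of_subset_of_nonneg (Finset.filter_subset _ _)
      (fun a _ _ => (hq a).le)
    -- Jensen
    have jensen := Real.convexOn_mul_log.map_sum_le (t := T')
      (w := fun a => q a / Q') (p := fun a => p a / q a)
      (fun a _ => div_nonneg (hq a).le hQ'pos.le)
      (by rw [← Finset.sum_div, div_self hQ'pos.ne'])
      (fun a _ => Set.mem_Ici.2 (div_nonneg (hp a) (hq a).le))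
    have hzs : ∑ a ∈ T', (q a / Q') • (p a / q a) = P / Q' := by
      rw [← hPsum]
      rw [Finset.sum_div]
      apply Finset.sum_congr rfl
      intro a _
      have := (hq a).ne'
      simp only [smul_eq_mul]; field_simp
    rw [hzs] at jensen
    have key : P * Real.log (P / Q') ≤ ∑ a ∈ T', p a * Real.log (p a / q a) := by
      have h2 : ∑ a ∈ T', (q a / Q') • ((p a / q a) * Real.log (p a / q a)) =
          (∑ a ∈ T', p a * Real.log (p a / q a)) / Q' := by
        rw [Finset.sum_div]
        apply Finset.sum_congr rfl
        intro a _
        have := (hq a).ne'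
        simp only [smul_eq_mul]
        field_simp
      rw [h2] at jensen
      have := mul_le_mul_of_nonneg_left jensen hQ'pos.le
      calc P * Real.log (P / Q') = Q' * (P / Q' * Real.log (P / Q')) := by
            field_simp
        _ ≤ Q' * ((∑ a ∈ T', p a * Real.log (p a / q a)) / Q') := this
        _ = ∑ a ∈ T', p a * Real.log (p a / q a) := by field_simp
    refine le_trans ?_ key
    apply mul_le_mul_of_nonneg_left _ hPpos.le
    apply Real.log_le_log (by positivity)
    exact div_le_div_of_nonneg_left hPpos.le hQ'pos hQ'Q

open Finset in
lemma pinsker_fin {B : Type} [Fintype B] (p q : B → ℝ)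
    (hp0 : ∀ a, 0 ≤ p a) (hq0 : ∀ a, 0 < q a)
    (hp1 : ∑ a, p a = 1) (hq1 : ∑ a, q a = 1) :
    (∑ a, |p a - q a|) ^ 2 ≤ 2 * KLdiv p q := by
  classical
  set E := Finset.univ.filter (fun a => q a < p a) with hE
  set Ec := Finset.univ.filter (fun a => ¬ q a < p a) with hEc
  have hsplitp : ∑ a ∈ E, p a + ∑ a ∈ Ec, p a = 1 := by
    rw [hE, hEc, Finset.sum_filter_add_sum_filter_not, hp1]
  have hsplitq : ∑ a ∈ E, q a + ∑ a ∈ Ec, q a = 1 := by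
    rw [hE, hEc, Finset.sum_filter_add_sum_filter_not, hq1]
  set pE := ∑ a ∈ E, p a with hpE
  set qE := ∑ a ∈ E, q a with hqE
  -- total variation identity
  have habs : ∑ a, |p a - q a| = 2 * (pE - qE) := by
    rw [← Finset.sum_filter_add_sum_filter_not Finset.univ (fun a => q a < p a)
      (fun a => |p a - q a|), ← hE, ← hEc]
    have e1 : ∑ a ∈ E, |p a - q a| = ∑ a ∈ E, (p a - q a) := by
      apply Finset.sum_congr rfl
      intro a ha
      exact abs_of_pos (sub_pos.2 (Finset.mem_filter.1 ha).2)
    have e2 : ∑ a ∈ Ec, |p a - q a| = ∑ a ∈ Ec, (q a - p a) := by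
      apply Finset.sum_congr rfl
      intro a ha
      rw [abs_sub_comm]
      exact abs_of_nonneg (sub_nonneg.2 (le_of_not_gt (Finset.mem_filter.1 ha).2))
    rw [e1, e2, Finset.sum_sub_distrib, Finset.sum_sub_distrib]
    have : ∑ a ∈ Ec, p a = 1 - pE := by linarith
    have : ∑ a ∈ Ec, q a = 1 - qE := by linarith
    linarith
  -- split the KL divergence
  have hKLsplit : KLdiv p q =
      (∑ a ∈ E.filter (fun a => 0 < p a), p a * Real.log (p a / q a)) +
      (∑ a ∈ Ec.filter (fun a => 0 < p a), p a * Real.log (p a / q a)) := by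
    unfold KLdiv
    rw [← Finset.sum_filter_add_sum_filter_not
      (Finset.univ.filter (fun a => 0 < p a)) (fun a => q a < p a)]
    congr 1
    · rw [Finset.filter_filter, Finset.filter_filter]
      apply Finset.sum_congr _ (fun _ _ => rfl)
      apply Finset.filter_congr
      intro a _
      simp [and_comm]
    · rw [Finset.filter_filter, Finset.filter_filter]
      apply Finset.sum_congr _ (fun _ _ => rfl)
      apply Finset.filter_congr
      intro a _
      simp [and_comm]
  have hls1 := log_sum_ineq p q hp0 hq0 E
  have hls2 := log_sum_ineq p q hp0 hq0 Ec
  have hEcp : ∑ a ∈ Ec, p a = 1 - pE := by linarith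
  have hEcq : ∑ a ∈ Ec, q a = 1 - qE := by linarith
  rw [← hpE, ← hqE] at hls1
  rw [hEcp, hEcq] at hls2
  -- binary pinsker hypotheses
  have hpE0 : 0 ≤ pE := Finset.sum_nonneg (fun a _ => hp0 a)
  have hqE0 : 0 ≤ qE := Finset.sum_nonneg (fun a _ => (hq0 a).le)
  have hpE1 : pE ≤ 1 := by
    have : 0 ≤ ∑ a ∈ Ec, p a := Finset.sum_nonneg (fun a _ => hp0 a)
    linarith
  have hqE1 : qE ≤ 1 := by
    have : 0 ≤ ∑ a ∈ Ec, q a := Finset.sum_nonneg (fun a _ => (hq0 a).le)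
    linarith
  have hq0imp : qE = 0 → pE = 0 := by
    intro h
    have hEe : E = ∅ := by
      by_contra hne
      have : 0 < qE := Finset.sum_pos (fun a _ => hq0 a) (Finset.nonempty_iff_ne_empty.2 hne)
      linarith
    rw [hpE, hEe]; simp
  have hq1imp : qE = 1 → pE = 1 := by
    intro h
    have hEce : Ec = ∅ := by
      by_contra hne
      have : 0 < ∑ a ∈ Ec, q a :=
        Finset.sum_pos (fun a _ => hq0 a) (Finset.nonempty_iff_ne_empty.2 hne)
      linarith
    have : ∑ a ∈ Ec, p a = 0 := by rw [hEce]; simp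
    linarith
  have hbin := pinsker_bin pE qE hpE0 hpE1 hqE0 hqE1 hq0imp hq1imp
  rw [habs, hKLsplit]
  nlinarith [hls1, hls2, hbin]

section MDPlemmas

variable [Nonempty S] [Nonempty A]

/-- Bound on the action-value function. -/
lemma q_abs_le (M : FiniteMDP S A) (π Q : S → A → ℝ) (hπ : IsPolicy π) (hQ : IsQ M π Q) :
    ∀ s a, |Q s a| ≤ 1 / (1 - M.γ) := by
  obtain ⟨⟨s0, a0⟩, -, hmax⟩ := Finset.exists_max_image (Finset.univ : Finset (S × A))
    (fun p => |Q p.1 p.2|) Finset.univ_nonempty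
  have hmax' : ∀ s a, |Q s a| ≤ |Q s0 a0| := fun s a => hmax (s, a) (Finset.mem_univ _)
  set m := |Q s0 a0| with hm
  have hγ0 := M.γ_pos
  have hγ1 := M.γ_lt_one
  have hstep : m ≤ 1 + M.γ * m := by
    conv_lhs => rw [hm, hQ s0 a0]
    calc |M.r s0 a0 + M.γ * ∑ s', M.P s0 a0 s' * ∑ a', π s' a' * Q s' a'|
        ≤ |M.r s0 a0| + |M.γ * ∑ s', M.P s0 a0 s' * ∑ a', π s' a' * Q s' a'| := abs_add_le _ _
      _ = |M.r s0 a0| + M.γ * |∑ s', M.P s0 a0 s' * ∑ a', π s' a' * Q s' a'| := by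
          rw [abs_mul, abs_of_pos hγ0]
      _ ≤ 1 + M.γ * m := by
          gcongr
          · exact M.r_bound s0 a0
          · calc |∑ s', M.P s0 a0 s' * ∑ a', π s' a' * Q s' a'|
                ≤ ∑ s', |M.P s0 a0 s' * ∑ a', π s' a' * Q s' a'| :=
                  Finset.abs_sum_le_sum_abs _ _
              _ ≤ ∑ s', M.P s0 a0 s' * m := by
                  apply Finset.sum_le_sum
                  intro s' _
                  rw [abs_mul, abs_of_nonneg (M.P_nonneg s0 a0 s')]
                  apply mul_le_mul_of_nonneg_left _ (M.P_nonneg s0 a0 s')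
                  calc |∑ a', π s' a' * Q s' a'| ≤ ∑ a', |π s' a' * Q s' a'| :=
                        Finset.abs_sum_le_sum_abs _ _
                    _ ≤ ∑ a', π s' a' * m := by
                        apply Finset.sum_le_sum
                        intro a' _
                        rw [abs_mul, abs_of_nonneg (hπ.1 s' a')]
                        exact mul_le_mul_of_nonneg_left (hmax' s' a') (hπ.1 s' a')
                    _ = m := by rw [← Finset.sum_mul, hπ.2 s', one_mul]
              _ = m := by rw [← Finset.sum_mul, M.P_sum_one s0 a0, one_mul]
  intro s a
  refine le_trans (hmax' s a) ?_
  rw [le_div_iff₀ (by linarith)]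
  nlinarith

lemma d_sum_one (M : FiniteMDP S A) (π : S → A → ℝ) (d : S → ℝ)
    (hπ : IsPolicy π) (hd : IsD M π d) : ∑ s, d s = 1 := by
  have hγ1 := M.γ_lt_one
  have key : ∑ s', d s' = (1 - M.γ) + M.γ * ∑ s, d s := by
    calc ∑ s', d s'
        = ∑ s', ((1 - M.γ) * (if s' = M.s0 then (1:ℝ) else 0)
            + M.γ * ∑ s, d s * ∑ a, π s a * M.P s a s') := by
          exact Finset.sum_congr rfl (fun s' _ => hd s')
      _ = (1 - M.γ) * ∑ s', (if s' = M.s0 then (1:ℝ) else 0)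
            + M.γ * ∑ s', ∑ s, d s * ∑ a, π s a * M.P s a s' := by
          rw [Finset.sum_add_distrib, Finset.mul_sum, Finset.mul_sum]
      _ = (1 - M.γ) + M.γ * ∑ s, d s := by
          congr 1
          · simp
          · congr 1
            rw [Finset.sum_comm]
            apply Finset.sum_congr rfl
            intro s _
            rw [← Finset.mul_sum, ← Finset.sum_comm]
            have : ∑ s', ∑ a, π s a * M.P s a s' = 1 := by
              rw [Finset.sum_comm]
              calc ∑ a, ∑ s', π s a * M.P s a s'
                  = ∑ a, π s a * ∑ s', M.P s a s' := by
                    exact Finset.sum_congr rfl (fun a _ => (Finset.mul_sum _ _ _).symm)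
                _ = ∑ a, π s a := by
                    exact Finset.sum_congr rfl (fun a _ => by rw [M.P_sum_one, mul_one])
                _ = 1 := hπ.2 s
            rw [Finset.sum_comm] at this
            rw [this, mul_one]
  have h1γ : (1 : ℝ) - M.γ ≠ 0 := by linarith
  have h2 : (1 - M.γ) * (∑ s, d s) = (1 - M.γ) * 1 := by nlinarith [key]
  exact mul_left_cancel₀ h1γ h2

lemma d_nonneg (M : FiniteMDP S A) (π : S → A → ℝ) (d : S → ℝ)
    (hπ : IsPolicy π) (hd : IsD M π d) : ∀ s, 0 ≤ d s := by
  classical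
  have hγ0 := M.γ_pos
  have hγ1 := M.γ_lt_one
  set m : S → S → ℝ := fun s s' => ∑ a, π s a * M.P s a s' with hmdef
  have hm0 : ∀ s s', 0 ≤ m s s' :=
    fun s s' => Finset.sum_nonneg (fun a _ => mul_nonneg (hπ.1 s a) (M.P_nonneg s a s'))
  have hm1 : ∀ s, ∑ s', m s s' = 1 := by
    intro s
    rw [hmdef]
    simp only
    rw [Finset.sum_comm]
    calc ∑ a, ∑ s', π s a * M.P s a s'
        = ∑ a, π s a * ∑ s', M.P s a s' :=
          Finset.sum_congr rfl (fun a _ => (Finset.mul_sum _ _ _).symm)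
      _ = ∑ a, π s a := Finset.sum_congr rfl (fun a _ => by rw [M.P_sum_one, mul_one])
      _ = 1 := hπ.2 s
  -- iterated vector
  let g : ℕ → S → ℝ := fun n => Nat.rec d (fun _ gn s' => ∑ s, gn s * m s s') n
  have hg0 : g 0 = d := rfl
  have hgsucc : ∀ n s', g (n + 1) s' = ∑ s, g n s * m s s' := fun n s' => rfl
  set B := ∑ s, |d s| with hB
  have hgB : ∀ n, ∑ s, |g n s| ≤ B := by
    intro n
    induction n with
    | zero => exact le_of_eq (by rw [hg0, hB])
    | succ n ih =>
        calc ∑ s', |g (n+1) s'| = ∑ s', |∑ s, g n s * m s s'| := by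
              exact Finset.sum_congr rfl (fun s' _ => by rw [hgsucc])
          _ ≤ ∑ s', ∑ s, |g n s| * m s s' := by
              apply Finset.sum_le_sum
              intro s' _
              refine le_trans (Finset.abs_sum_le_sum_abs _ _) ?_
              apply Finset.sum_le_sum
              intro s _
              rw [abs_mul, abs_of_nonneg (hm0 s s')]
          _ = ∑ s, |g n s| := by
              rw [Finset.sum_comm]
              apply Finset.sum_congr rfl
              intro s _
              rw [← Finset.mul_sum, hm1 s, mul_one]
          _ ≤ B := ih
  have hkey : ∀ n s, M.γ ^ n * g n s ≤ d s := by
    intro n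
    induction n with
    | zero => intro s; rw [hg0]; simp
    | succ n ih =>
        intro s'
        rw [hd s']
        have h1 : 0 ≤ (1 - M.γ) * (if s' = M.s0 then (1:ℝ) else 0) := by
          apply mul_nonneg (by linarith)
          split <;> norm_num
        have h2 : M.γ ^ (n+1) * g (n+1) s' ≤ M.γ * ∑ s, d s * m s s' := by
          rw [hgsucc]
          have : M.γ ^ (n+1) * ∑ s, g n s * m s s'
              = M.γ * ∑ s, (M.γ ^ n * g n s) * m s s' := by
            rw [Finset.mul_sum, Finset.mul_sum, pow_succ]
            apply Finset.sum_congr rfl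
            intro s _
            ring
          rw [this]
          apply mul_le_mul_of_nonneg_left _ hγ0.le
          apply Finset.sum_le_sum
          intro s _
          exact mul_le_mul_of_nonneg_right (ih s) (hm0 s s')
        have : M.γ * ∑ s, d s * ∑ a, π s a * M.P s a s' = M.γ * ∑ s, d s * m s s' := rfl
        rw [this]
        linarith
  intro s
  by_contra hneg
  push_neg at hneg
  have hBnn : 0 ≤ B := Finset.sum_nonneg (fun s _ => abs_nonneg _)
  have hlow : ∀ n, -(M.γ ^ n * B) ≤ d s := by
    intro n
    have h1 : -B ≤ g n s := by
      have : |g n s| ≤ ∑ t, |g n t| :=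
        Finset.single_le_sum (fun t _ => abs_nonneg (g n t)) (Finset.mem_univ s)
      have := le_trans this (hgB n)
      linarith [neg_abs_le (g n s)]
    have := hkey n s
    nlinarith [pow_nonneg hγ0.le n]
  have hBpos : 0 < B := by
    rcases eq_or_lt_of_le hBnn with h | h
    · exfalso
      have : |d s| ≤ B := Finset.single_le_sum (fun t _ => abs_nonneg (d t)) (Finset.mem_univ s)
      rw [← h] at this
      have := abs_nonneg (d s)
      have : d s = 0 := by
        have h2 : |d s| = 0 := le_antisymm (by linarith) (abs_nonneg _)
        exact abs_eq_zero.1 h2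
      linarith
    · exact h
  obtain ⟨n, hn⟩ := exists_pow_lt_of_lt_one (div_pos (by linarith : (0:ℝ) < -d s) hBpos) hγ1
  have := hlow n
  have hcontr : M.γ ^ n * B < -d s := by
    have := mul_lt_mul_of_pos_right hn hBpos
    rwa [div_mul_cancel₀] at this
    exact hBpos.ne'
  linarith

lemma sum_swap3 {α β γ' : Type} [Fintype α] [Fintype β] [Fintype γ'] (F : α → β → γ' → ℝ) :
    ∑ x, ∑ y, ∑ z, F x y z = ∑ z, ∑ x, ∑ y, F x y z := by
  have h1 : ∀ x : α, ∑ y : β, ∑ z : γ', F x y z = ∑ z : γ', ∑ y : β, F x y z :=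
    fun x => Finset.sum_comm
  simp_rw [h1]
  exact Finset.sum_comm

lemma jret_eq (M : FiniteMDP S A) (π Q ρ : S → A → ℝ) (e : S → ℝ)
    (hQ : IsQ M π Q) (he : IsD M ρ e) :
    Jret M ρ e = (∑ s, e s * (∑ a, (ρ s a - π s a) * Q s a))
      + (1 - M.γ) * (∑ a', π M.s0 a' * Q M.s0 a') := by
  have hr : ∀ s a, M.r s a = Q s a - M.γ * ∑ s', M.P s a s' * ∑ a', π s' a' * Q s' a' :=
    fun s a => by linarith [hQ s a]
  -- step 1
  have step1 : Jret M ρ e = (∑ s, e s * ∑ a, ρ s a * Q s a)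
      - M.γ * ∑ s', (∑ s, e s * ∑ a, ρ s a * M.P s a s') * (∑ a', π s' a' * Q s' a') := by
    unfold Jret
    have lhs1 : ∑ s, e s * ∑ a, ρ s a * M.r s a
        = (∑ s, e s * ∑ a, ρ s a * Q s a)
          - ∑ s, ∑ a, ∑ s', e s * (ρ s a * (M.γ * (M.P s a s' * ∑ a', π s' a' * Q s' a'))) := by
      simp only [hr, mul_sub, Finset.mul_sum, Finset.sum_sub_distrib]
    rw [lhs1]
    congr 1
    rw [sum_swap3 (fun s a s' => e s * (ρ s a * (M.γ * (M.P s a s' * ∑ a', π s' a' * Q s' a'))))]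
    simp only [Finset.mul_sum, Finset.sum_mul]
    apply Finset.sum_congr rfl
    intro s' _
    rw [sum_swap3 (fun (x : S) (x1 : A) (i : A) =>
      e x * (ρ x x1 * (M.γ * (M.P x x1 s' * (π s' i * Q s' i)))))]
    apply Finset.sum_congr rfl
    intro s _
    apply Finset.sum_congr rfl
    intro a _
    apply Finset.sum_congr rfl
    intro b _
    ring
  -- step 2 : use the occupancy equation
  have step2 : M.γ * ∑ s', (∑ s, e s * ∑ a, ρ s a * M.P s a s') * (∑ a', π s' a' * Q s' a')
      = (∑ s', e s' * ∑ a', π s' a' * Q s' a')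
        - (1 - M.γ) * (∑ a', π M.s0 a' * Q M.s0 a') := by
    have hocc : ∀ s', M.γ * (∑ s, e s * ∑ a, ρ s a * M.P s a s')
        = e s' - (1 - M.γ) * (if s' = M.s0 then (1:ℝ) else 0) := by
      intro s'
      have := he s'
      linarith
    calc M.γ * ∑ s', (∑ s, e s * ∑ a, ρ s a * M.P s a s') * (∑ a', π s' a' * Q s' a')
        = ∑ s', (M.γ * (∑ s, e s * ∑ a, ρ s a * M.P s a s')) * (∑ a', π s' a' * Q s' a') := by
          rw [Finset.mul_sum]
          exact Finset.sum_congr rfl (fun s' _ => by ring)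
      _ = ∑ s', (e s' - (1 - M.γ) * (if s' = M.s0 then (1:ℝ) else 0))
            * (∑ a', π s' a' * Q s' a') := by
          exact Finset.sum_congr rfl (fun s' _ => by rw [hocc s'])
      _ = (∑ s', e s' * ∑ a', π s' a' * Q s' a')
            - ∑ s', (1 - M.γ) * ((if s' = M.s0 then (1:ℝ) else 0) * (∑ a', π s' a' * Q s' a')) := by
          rw [← Finset.sum_sub_distrib]
          exact Finset.sum_congr rfl (fun s' _ => by ring)
      _ = (∑ s', e s' * ∑ a', π s' a' * Q s' a')
            - (1 - M.γ) * (∑ a', π M.s0 a' * Q M.s0 a') := by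
          congr 1
          rw [← Finset.mul_sum]
          congr 1
          simp [ite_mul]
  rw [step1, step2]
  have step3 : ∑ s, e s * (∑ a, (ρ s a - π s a) * Q s a)
      = (∑ s, e s * ∑ a, ρ s a * Q s a) - (∑ s', e s' * ∑ a', π s' a' * Q s' a') := by
    rw [← Finset.sum_sub_distrib]
    apply Finset.sum_congr rfl
    intro s _
    rw [← mul_sub, ← Finset.sum_sub_distrib]
    congr 1
    exact Finset.sum_congr rfl (fun a _ => by ring)
  rw [step3]
  ring

lemma occ_l1_bound (M : FiniteMDP S A) (π πt : S → A → ℝ) (d dt : S → ℝ)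
    (hπ : IsPolicy π) (hπt : IsPolicy πt) (hd : IsD M π d) (hdt : IsD M πt dt)
    (κ : ℝ) (hκ : ∀ s, ∑ a, |πt s a - π s a| ≤ κ) :
    (1 - M.γ) * ∑ s, |dt s - d s| ≤ M.γ * κ := by
  have hγ0 := M.γ_pos
  have hd0 : ∀ s, 0 ≤ d s := d_nonneg M π d hπ hd
  have hds : ∑ s, d s = 1 := d_sum_one M π d hπ hd
  have hmt1 : ∀ s, ∑ s', ∑ a, πt s a * M.P s a s' = 1 := by
    intro s
    rw [Finset.sum_comm]
    calc ∑ a, ∑ s', πt s a * M.P s a s'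
        = ∑ a, πt s a * ∑ s', M.P s a s' :=
          Finset.sum_congr rfl (fun a _ => (Finset.mul_sum _ _ _).symm)
      _ = ∑ a, πt s a := Finset.sum_congr rfl (fun a _ => by rw [M.P_sum_one, mul_one])
      _ = 1 := hπt.2 s
  have hmt0 : ∀ s s', 0 ≤ ∑ a, πt s a * M.P s a s' :=
    fun s s' => Finset.sum_nonneg (fun a _ => mul_nonneg (hπt.1 s a) (M.P_nonneg s a s'))
  have hdiff : ∀ s', dt s' - d s' =
      M.γ * ((∑ s, (dt s - d s) * ∑ a, πt s a * M.P s a s')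
        + ∑ s, d s * ((∑ a, πt s a * M.P s a s') - ∑ a, π s a * M.P s a s')) := by
    intro s'
    rw [hdt s', hd s']
    have : ∑ s, dt s * ∑ a, πt s a * M.P s a s' - ∑ s, d s * ∑ a, π s a * M.P s a s'
        = (∑ s, (dt s - d s) * ∑ a, πt s a * M.P s a s')
          + ∑ s, d s * ((∑ a, πt s a * M.P s a s') - ∑ a, π s a * M.P s a s') := by
      rw [← Finset.sum_sub_distrib, ← Finset.sum_add_distrib]
      exact Finset.sum_congr rfl (fun s _ => by ring)
    nlinarith [this]
  have habs : ∀ s', |dt s' - d s'| ≤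
      M.γ * ((∑ s, |dt s - d s| * ∑ a, πt s a * M.P s a s')
        + ∑ s, d s * ∑ a, |πt s a - π s a| * M.P s a s') := by
    intro s'
    rw [hdiff s', abs_mul, abs_of_pos hγ0]
    apply mul_le_mul_of_nonneg_left _ hγ0.le
    refine le_trans (abs_add_le _ _) (add_le_add ?_ ?_)
    · refine le_trans (Finset.abs_sum_le_sum_abs _ _) (Finset.sum_le_sum fun s _ => ?_)
      rw [abs_mul, abs_of_nonneg (hmt0 s s')]
    · refine le_trans (Finset.abs_sum_le_sum_abs _ _) (Finset.sum_le_sum fun s _ => ?_)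
      rw [abs_mul, abs_of_nonneg (hd0 s)]
      apply mul_le_mul_of_nonneg_left _ (hd0 s)
      have : (∑ a, πt s a * M.P s a s') - ∑ a, π s a * M.P s a s'
          = ∑ a, (πt s a - π s a) * M.P s a s' := by
        rw [← Finset.sum_sub_distrib]
        exact Finset.sum_congr rfl (fun a _ => by ring)
      rw [this]
      refine le_trans (Finset.abs_sum_le_sum_abs _ _) (Finset.sum_le_sum fun a _ => ?_)
      rw [abs_mul, abs_of_nonneg (M.P_nonneg s a s')]
  have hsum : ∑ s', |dt s' - d s'| ≤
      M.γ * ((∑ s, |dt s - d s|) + κ) := by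
    calc ∑ s', |dt s' - d s'|
        ≤ ∑ s', M.γ * ((∑ s, |dt s - d s| * ∑ a, πt s a * M.P s a s')
            + ∑ s, d s * ∑ a, |πt s a - π s a| * M.P s a s') :=
          Finset.sum_le_sum (fun s' _ => habs s')
      _ = M.γ * ((∑ s, |dt s - d s| * ∑ s', ∑ a, πt s a * M.P s a s')
            + ∑ s, d s * ∑ s', ∑ a, |πt s a - π s a| * M.P s a s') := by
          rw [← Finset.mul_sum]
          congr 1
          rw [Finset.sum_add_distrib]
          congr 1
          · rw [Finset.sum_comm]
            exact Finset.sum_congr rfl (fun s _ => by rw [← Finset.mul_sum])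
          · rw [Finset.sum_comm]
            exact Finset.sum_congr rfl (fun s _ => by rw [← Finset.mul_sum])
      _ ≤ M.γ * ((∑ s, |dt s - d s|) + κ) := by
          apply mul_le_mul_of_nonneg_left _ hγ0.le
          apply add_le_add
          · apply le_of_eq
            apply Finset.sum_congr rfl
            intro s _
            rw [hmt1 s, mul_one]
          · calc ∑ s, d s * ∑ s', ∑ a, |πt s a - π s a| * M.P s a s'
                ≤ ∑ s, d s * κ := by
                  apply Finset.sum_le_sum
                  intro s _
                  apply mul_le_mul_of_nonneg_left _ (hd0 s)
                  calc ∑ s', ∑ a, |πt s a - π s a| * M.P s a s'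
                      = ∑ a, |πt s a - π s a| * ∑ s', M.P s a s' := by
                        rw [Finset.sum_comm]
                        exact Finset.sum_congr rfl (fun a _ => (Finset.mul_sum _ _ _).symm)
                    _ = ∑ a, |πt s a - π s a| :=
                        Finset.sum_congr rfl (fun a _ => by rw [M.P_sum_one, mul_one])
                    _ ≤ κ := hκ s
                _ = κ := by rw [← Finset.sum_mul, hds, one_mul]
  nlinarith [hsum]

end MDPlemmas

/-- **Main monotonic improvement bound, KL-budget form** (Theorem 4, `1/(4C_K)` branch). -/
theorem cpp_monotonic_improvement_kl_budget
    {S A : Type} [Fintype S] [Fintype A] [DecidableEq S] [Nonempty S] [Nonempty A]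
    (M : FiniteMDP S A) (πK1 πK Q : S → A → ℝ) (C ζ : ℝ) (πt : S → A → ℝ) (dt d : S → ℝ)
    (hπK1 : IsPolicy πK1) (hπK : IsPolicy πK) (hπKpos : ∀ s a, 0 < πK s a)
    (hQ : IsQ M πK Q) (hd : IsD M πK d)
    (hC : 0 < C)
    (hKL : (⨆ s : S, KLdiv (πK1 s) (πK s)) ≤ 2 * C)
    (hAdv : 0 ≤ expPolAdv πK1 πK Q d)
    (hζdef : ζ = (1 - M.γ) ^ 3 * expPolAdv πK1 πK Q d / (8 * M.γ * C))
    (hζ1 : ζ ≤ 1)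
    (hmix : ∀ s a, πt s a = ζ * πK1 s a + (1 - ζ) * πK s a)
    (hdt : IsD M πt dt) :
    Jret M πt dt - Jret M πK d ≥
      ((1 - M.γ) ^ 3 * (expPolAdv πK1 πK Q d) ^ 2 / (4 * M.γ)) * (1 / (4 * C)) := by
  have hγ0 := M.γ_pos
  have hγ1 := M.γ_lt_one
  have h1γ : (0:ℝ) < 1 - M.γ := by linarith
  set Aexp := expPolAdv πK1 πK Q d with hA
  have hζ0 : 0 ≤ ζ := by
    rw [hζdef]
    apply div_nonneg (mul_nonneg (by positivity) hAdv) (by positivity)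
  have hπt : IsPolicy πt := by
    constructor
    · intro s a
      rw [hmix]
      have h1 := hπK1.1 s a
      have h2 := hπK.1 s a
      nlinarith
    · intro s
      calc ∑ a, πt s a = ∑ a, (ζ * πK1 s a + (1 - ζ) * πK s a) :=
            Finset.sum_congr rfl (fun a _ => hmix s a)
        _ = ζ * (∑ a, πK1 s a) + (1 - ζ) * (∑ a, πK s a) := by
            rw [Finset.sum_add_distrib, Finset.mul_sum, Finset.mul_sum]
        _ = 1 := by rw [hπK1.2 s, hπK.2 s]; ring
  set κ := 2 * Real.sqrt C with hκdef
  have hκ0 : 0 ≤ κ := by positivity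
  have hTV : ∀ s, ∑ a, |πK1 s a - πK s a| ≤ κ := by
    intro s
    have hkl : KLdiv (πK1 s) (πK s) ≤ 2 * C :=
      le_trans (le_ciSup (f := fun s : S => KLdiv (πK1 s) (πK s))
        (Set.Finite.bddAbove (Set.finite_range _)) s) hKL
    have hpin := pinsker_fin (πK1 s) (πK s) (hπK1.1 s) (hπKpos s) (hπK1.2 s) (hπK.2 s)
    have hx0 : 0 ≤ ∑ a, |πK1 s a - πK s a| :=
      Finset.sum_nonneg (fun a _ => abs_nonneg _)
    nlinarith [Real.sq_sqrt hC.le, Real.sqrt_nonneg C]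
  have hTVt : ∀ s, ∑ a, |πt s a - πK s a| ≤ ζ * κ := by
    intro s
    calc ∑ a, |πt s a - πK s a| = ∑ a, ζ * |πK1 s a - πK s a| := by
          apply Finset.sum_congr rfl
          intro a _
          rw [hmix s a, show ζ * πK1 s a + (1 - ζ) * πK s a - πK s a
            = ζ * (πK1 s a - πK s a) by ring, abs_mul, abs_of_nonneg hζ0]
      _ = ζ * ∑ a, |πK1 s a - πK s a| := (Finset.mul_sum _ _ _).symm
      _ ≤ ζ * κ := mul_le_mul_of_nonneg_left (hTV s) hζ0
  have hQb := q_abs_le M πK Q hπK hQ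
  have hAdvb : ∀ s, |polAdv πK1 πK Q s| ≤ κ / (1 - M.γ) := by
    intro s
    unfold polAdv
    refine le_trans (Finset.abs_sum_le_sum_abs _ _) ?_
    calc ∑ a, |(πK1 s a - πK s a) * Q s a|
        ≤ ∑ a, |πK1 s a - πK s a| * (1 / (1 - M.γ)) := by
          apply Finset.sum_le_sum
          intro a _
          rw [abs_mul]
          exact mul_le_mul_of_nonneg_left (hQb s a) (abs_nonneg _)
      _ = (∑ a, |πK1 s a - πK s a|) * (1 / (1 - M.γ)) := (Finset.sum_mul _ _ _).symm
      _ ≤ κ * (1 / (1 - M.γ)) := mul_le_mul_of_nonneg_right (hTV s) (by positivity)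
      _ = κ / (1 - M.γ) := by ring
  have hPDL : Jret M πt dt - Jret M πK d = ∑ s, dt s * polAdv πt πK Q s := by
    rw [jret_eq M πK Q πt dt hQ hdt, jret_eq M πK Q πK d hQ hd]
    have hzero : ∑ s, d s * (∑ a, (πK s a - πK s a) * Q s a) = 0 := by simp
    unfold polAdv
    linarith [hzero]
  have hmixAdv : ∀ s, polAdv πt πK Q s = ζ * polAdv πK1 πK Q s := by
    intro s
    unfold polAdv
    rw [Finset.mul_sum]
    apply Finset.sum_congr rfl
    intro a _
    rw [hmix s a]
    ring
  have hE := occ_l1_bound M πK πt d dt hπK hπt hd hdt (ζ * κ) hTVt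
  set E := ∑ s, |dt s - d s| with hEdef
  have hE0 : 0 ≤ E := Finset.sum_nonneg (fun s _ => abs_nonneg _)
  have herr : |∑ s, (dt s - d s) * polAdv πK1 πK Q s| ≤ E * (κ / (1 - M.γ)) := by
    refine le_trans (Finset.abs_sum_le_sum_abs _ _) ?_
    rw [hEdef, Finset.sum_mul]
    apply Finset.sum_le_sum
    intro s _
    rw [abs_mul]
    exact mul_le_mul_of_nonneg_left (hAdvb s) (abs_nonneg _)
  have hsplit : ∑ s, dt s * polAdv πK1 πK Q s
      = Aexp + ∑ s, (dt s - d s) * polAdv πK1 πK Q s := by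
    rw [hA]
    unfold expPolAdv
    rw [← Finset.sum_add_distrib]
    apply Finset.sum_congr rfl
    intro s _
    ring
  have hchain : Jret M πt dt - Jret M πK d ≥ ζ * (Aexp - E * (κ / (1 - M.γ))) := by
    rw [hPDL]
    have hrw : ∑ s, dt s * polAdv πt πK Q s = ζ * ∑ s, dt s * polAdv πK1 πK Q s := by
      rw [Finset.mul_sum]
      apply Finset.sum_congr rfl
      intro s _
      rw [hmixAdv s]
      ring
    rw [hrw, hsplit]
    have h2 : Aexp - E * (κ / (1 - M.γ))
        ≤ Aexp + ∑ s, (dt s - d s) * polAdv πK1 πK Q s := by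
      have := neg_abs_le (∑ s, (dt s - d s) * polAdv πK1 πK Q s)
      linarith [herr]
    exact mul_le_mul_of_nonneg_left h2 hζ0
  have hEb : E ≤ M.γ * (ζ * κ) / (1 - M.γ) := by
    rw [le_div_iff₀ h1γ]
    nlinarith [hE]
  have hk2 : κ ^ 2 = 4 * C := by
    rw [hκdef, mul_pow, Real.sq_sqrt hC.le]
    ring
  have hfin : Jret M πt dt - Jret M πK d
      ≥ ζ * Aexp - ζ ^ 2 * M.γ * (4 * C) / (1 - M.γ) ^ 2 := by
    have t0 : E * (κ / (1 - M.γ)) ≤ (M.γ * (ζ * κ) / (1 - M.γ)) * (κ / (1 - M.γ)) :=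
      mul_le_mul_of_nonneg_right hEb (by positivity)
    have t1 : ζ * (E * (κ / (1 - M.γ))) ≤ ζ ^ 2 * M.γ * (4 * C) / (1 - M.γ) ^ 2 := by
      calc ζ * (E * (κ / (1 - M.γ)))
          ≤ ζ * ((M.γ * (ζ * κ) / (1 - M.γ)) * (κ / (1 - M.γ))) :=
            mul_le_mul_of_nonneg_left t0 hζ0
        _ = ζ ^ 2 * M.γ * (κ ^ 2) / (1 - M.γ) ^ 2 := by
            field_simp
        _ = ζ ^ 2 * M.γ * (4 * C) / (1 - M.γ) ^ 2 := by rw [hk2]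
    nlinarith [hchain, t1]
  have key : ζ * Aexp - ζ ^ 2 * M.γ * (4 * C) / (1 - M.γ) ^ 2
      - ((1 - M.γ) ^ 3 * Aexp ^ 2 / (4 * M.γ)) * (1 / (4 * C))
      = (1 - M.γ) ^ 3 * Aexp ^ 2 / (16 * C) := by
    rw [hζdef]
    field_simp
    ring
  have hpos : 0 ≤ (1 - M.γ) ^ 3 * Aexp ^ 2 / (16 * C) := by positivity
  linarith [hfin, key, hpos]
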